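/- Let 0 < b < a be real numbers and let K be Rudin's Klein bottle with parameters a, b. For t ∈ ℂ, let K_t = {(z,w) ∈ K : w² = t z}, and for φ ∈ ℝ let C_φ = {(e^{2iθ} g(φ)², e^{iθ} g(φ) h(φ)) : θ ∈ ℝ}. Then: (i) C_φ = C_{−φ} for every φ ∈ ℝ; (ii) K_0 = C_0 ∪ C_{−π}; and (iii) for every t ∈ h(ℝ)² with t ≠ 0 (i.e., t = h(φ)² for some φ), there exists φ ∈ (0,π) with h(φ)² = t and K_t = C_φ, a single circle. -/

import Mathlib

open Complex Set

/-- `g(φ) = a + b cos φ`, as a complex number. -/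
noncomputable def gK (a b : ℝ) (φ : ℝ) : ℂ := ((a + b * Real.cos φ : ℝ) : ℂ)

/-- `h(φ) = sin φ + i sin 2φ`. -/
noncomputable def hK (φ : ℝ) : ℂ := (Real.sin φ : ℂ) + Complex.I * (Real.sin (2 * φ) : ℂ)

/-- Rudin's Klein bottle with parameters `a, b`:
`K = {(e^{2iθ} g(φ)², e^{iθ} g(φ) h(φ)) : θ, φ ∈ [−π, π)}`. -/
noncomputable def rudinKlein (a b : ℝ) : Set (ℂ × ℂ) :=
  {x | ∃ θ ∈ Set.Ico (-Real.pi) Real.pi, ∃ φ ∈ Set.Ico (-Real.pi) Real.pi,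
    x = (Complex.exp (2 * Complex.I * (θ : ℂ)) * gK a b φ ^ 2,
         Complex.exp (Complex.I * (θ : ℂ)) * gK a b φ * hK φ)}

/-- The closed annulus `A = {(z,0) : (a−b)² ≤ |z| ≤ (a+b)²}` in the plane `w = 0`. -/
def annulusA (a b : ℝ) : Set (ℂ × ℂ) :=
  {x | x.2 = 0 ∧ (a - b) ^ 2 ≤ ‖x.1‖ ∧ ‖x.1‖ ≤ (a + b) ^ 2}

/-- The circle `C_φ = {(e^{2iθ} g(φ)², e^{iθ} g(φ) h(φ)) : θ ∈ ℝ}`. -/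
noncomputable def circleC (a b : ℝ) (φ : ℝ) : Set (ℂ × ℂ) :=
  {x | ∃ θ : ℝ, x = (Complex.exp (2 * Complex.I * (θ : ℂ)) * gK a b φ ^ 2,
    Complex.exp (Complex.I * (θ : ℂ)) * gK a b φ * hK φ)}

/-- The fiber `K_t = {(z,w) ∈ K : w² = t z}` of Rudin's Klein bottle. -/
noncomputable def kleinFiber (a b : ℝ) (t : ℂ) : Set (ℂ × ℂ) :=
  {x ∈ rudinKlein a b | x.2 ^ 2 = t * x.1}

lemma hK_eq_iff (φ ψ : ℝ) : hK ψ = hK φ ↔ Real.sin ψ = Real.sin φ ∧ Real.sin (2*ψ) = Real.sin (2*φ) := by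
  simp only [hK, Complex.ext_iff, Complex.add_re, Complex.add_im, Complex.ofReal_re,
    Complex.ofReal_im, Complex.mul_re, Complex.mul_im, Complex.I_re, Complex.I_im]
  constructor <;> rintro ⟨h1, h2⟩ <;> constructor <;> linarith

lemma hK_neg (φ : ℝ) : hK (-φ) = -hK φ := by
  simp only [hK]
  rw [show (2:ℝ) * -φ = -(2*φ) by ring, Real.sin_neg, Real.sin_neg]
  push_cast; ring

lemma hK_eq_zero_iff (φ : ℝ) : hK φ = 0 ↔ Real.sin φ = 0 := by
  rw [show (0:ℂ) = hK 0 by simp [hK], hK_eq_iff]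
  simp [Real.sin_two_mul]
  tauto

lemma gK_ne_zero {a b : ℝ} (hb : 0 < b) (hab : b < a) (φ : ℝ) : gK a b φ ≠ 0 := by
  have h1 : -1 ≤ Real.cos φ := Real.neg_one_le_cos φ
  have : (0:ℝ) < a + b * Real.cos φ := by nlinarith
  simp only [gK, ne_eq, Complex.ofReal_eq_zero]
  linarith

lemma exp_two_theta (θ : ℝ) :
    Complex.exp (2 * Complex.I * (θ:ℂ)) = Complex.exp (Complex.I * (θ:ℂ)) ^ 2 := by
  rw [← Complex.exp_nat_mul]; ring_nf

/-- every angle has a representative in `[-π, π)` with the same `e^{iθ}`. -/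
lemma theta_reduce (θ : ℝ) : ∃ θ' ∈ Set.Ico (-Real.pi) Real.pi,
    Complex.exp (Complex.I * (θ':ℂ)) = Complex.exp (Complex.I * (θ:ℂ)) := by
  have hp : (0:ℝ) < 2 * Real.pi := by positivity
  refine ⟨θ - toIcoDiv hp (-Real.pi) θ • (2 * Real.pi), ?_, ?_⟩
  · have := sub_toIcoDiv_zsmul_mem_Ico hp (-Real.pi) θ
    rwa [show -Real.pi + 2 * Real.pi = Real.pi by ring] at this
  · set n := toIcoDiv hp (-Real.pi) θ
    have : Complex.I * ((θ - n • (2 * Real.pi) : ℝ) : ℂ)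
        = Complex.I * θ - n * (2 * Real.pi * Complex.I) := by push_cast [zsmul_eq_mul]; ring
    rw [this, Complex.exp_sub, Complex.exp_int_mul_two_pi_mul_I, div_one]

lemma circleC_congr {a b : ℝ} {φ ψ : ℝ} (hg : gK a b ψ = gK a b φ)
    (hh : hK ψ = hK φ ∨ hK ψ = -hK φ) : circleC a b ψ = circleC a b φ := by
  rcases hh with hh | hh
  · simp only [circleC, hg, hh]
  · ext x
    constructor
    · rintro ⟨θ, rfl⟩
      refine ⟨θ + Real.pi, ?_⟩
      have e1 : Complex.exp (Complex.I * ((θ + Real.pi : ℝ):ℂ))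
          = -Complex.exp (Complex.I * (θ:ℂ)) := by
        push_cast
        rw [mul_add, Complex.exp_add, mul_comm Complex.I (Real.pi:ℂ), Complex.exp_pi_mul_I]
        ring
      have e2 : Complex.exp (2 * Complex.I * ((θ + Real.pi : ℝ):ℂ))
          = Complex.exp (2 * Complex.I * (θ:ℂ)) := by
        rw [exp_two_theta, exp_two_theta, e1]; ring
      rw [e1, e2, hg, hh]
      simp only [Prod.mk.injEq]
      exact ⟨trivial, by ring⟩
    · rintro ⟨θ, rfl⟩
      refine ⟨θ + Real.pi, ?_⟩
      have e1 : Complex.exp (Complex.I * ((θ + Real.pi : ℝ):ℂ))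
          = -Complex.exp (Complex.I * (θ:ℂ)) := by
        push_cast
        rw [mul_add, Complex.exp_add, mul_comm Complex.I (Real.pi:ℂ), Complex.exp_pi_mul_I]
        ring
      have e2 : Complex.exp (2 * Complex.I * ((θ + Real.pi : ℝ):ℂ))
          = Complex.exp (2 * Complex.I * (θ:ℂ)) := by
        rw [exp_two_theta, exp_two_theta, e1]; ring
      rw [e1, e2, hg, hh]
      simp only [Prod.mk.injEq]
      exact ⟨trivial, by ring⟩

lemma circleC_subset_fiber {a b : ℝ} {t : ℂ} {φ : ℝ} (hφ : φ ∈ Set.Ico (-Real.pi) Real.pi)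
    (ht : hK φ ^ 2 = t) : circleC a b φ ⊆ kleinFiber a b t := by
  rintro x ⟨θ, rfl⟩
  obtain ⟨θ', hθ', he⟩ := theta_reduce θ
  have he2 : Complex.exp (2 * Complex.I * (θ':ℂ)) = Complex.exp (2 * Complex.I * (θ:ℂ)) := by
    rw [exp_two_theta, exp_two_theta, he]
  refine ⟨⟨θ', hθ', φ, hφ, by rw [he2, he]⟩, ?_⟩
  simp only
  rw [exp_two_theta, ← ht]; ring

lemma fiber_subset_circle {a b : ℝ} (hb : 0 < b) (hab : b < a) {t : ℂ} {φ : ℝ}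
    (hs : Real.sin φ ≠ 0) (ht : hK φ ^ 2 = t) : kleinFiber a b t ⊆ circleC a b φ := by
  rintro ⟨z, w⟩ ⟨⟨θ, hθ, ψ, hψ, hx⟩, hw⟩
  simp only [Prod.mk.injEq] at hx
  obtain ⟨hz, hw'⟩ := hx
  subst hz hw'
  simp only at hw
  -- derive hK ψ ^ 2 = hK φ ^ 2
  have hexp : Complex.exp (2 * Complex.I * (θ:ℂ)) ≠ 0 := Complex.exp_ne_zero _
  have hg : gK a b ψ ≠ 0 := gK_ne_zero hb hab ψ
  have key : hK ψ ^ 2 = t := by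
    have h2 : Complex.exp (Complex.I * (θ:ℂ)) ≠ 0 := Complex.exp_ne_zero _
    have hne : Complex.exp (Complex.I * (θ:ℂ)) ^ 2 * gK a b ψ ^ 2 ≠ 0 :=
      mul_ne_zero (pow_ne_zero _ h2) (pow_ne_zero _ hg)
    apply mul_right_cancel₀ hne
    rw [exp_two_theta] at hw
    linear_combination hw
  have key2 : hK ψ ^ 2 = hK φ ^ 2 := by rw [key, ht]
  have hfac : (hK ψ - hK φ) * (hK ψ + hK φ) = 0 := by linear_combination key2
  have hcos : hK ψ = hK φ ∨ hK ψ = -hK φ := by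
    rcases mul_eq_zero.mp hfac with h | h
    · exact Or.inl (sub_eq_zero.mp h)
    · exact Or.inr (by linear_combination h)
  have hgk : gK a b ψ = gK a b φ := by
    have hcc : Real.cos ψ = Real.cos φ := by
      rcases hcos with h | h
      · obtain ⟨h1, h2⟩ := (hK_eq_iff φ ψ).mp h
        rw [Real.sin_two_mul, Real.sin_two_mul, h1] at h2
        have : Real.sin φ * Real.cos ψ = Real.sin φ * Real.cos φ := by linarith
        exact mul_left_cancel₀ hs this
      · rw [← hK_neg φ, hK_eq_iff] at h
        obtain ⟨h1, h2⟩ := h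
        rw [show (2:ℝ) * -φ = -(2*φ) by ring] at h2
        rw [Real.sin_neg] at h1
        rw [Real.sin_neg, Real.sin_two_mul, Real.sin_two_mul, h1] at h2
        have hs' : -Real.sin φ ≠ 0 := neg_ne_zero.mpr hs
        have : -Real.sin φ * Real.cos ψ = -Real.sin φ * Real.cos φ := by linarith
        exact mul_left_cancel₀ hs' this
    simp [gK, hcc]
  rw [← circleC_congr hgk hcos]
  exact ⟨θ, rfl⟩

lemma hK_of_sin_cos {φ ψ : ℝ} (h1 : Real.sin ψ = Real.sin φ) (h2 : Real.cos ψ = Real.cos φ) :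
    hK ψ = hK φ := by
  rw [hK_eq_iff]
  exact ⟨h1, by rw [Real.sin_two_mul, Real.sin_two_mul, h1, h2]⟩

/-- The fibers of Rudin's Klein bottle under `(z,w) ↦ w²/z`:
(i) `C_φ = C_{−φ}`; (ii) `K_0 = C_0 ∪ C_{−π}`; (iii) for `t ≠ 0` of the form `h(φ)²`,
there is `φ ∈ (0,π)` with `h(φ)² = t` and `K_t = C_φ`, a single circle. -/
theorem kleinFiber_description (a b : ℝ) (hb : 0 < b) (hab : b < a) :
    (∀ φ : ℝ, circleC a b φ = circleC a b (-φ)) ∧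
    (kleinFiber a b 0 = circleC a b 0 ∪ circleC a b (-Real.pi)) ∧
    (∀ t : ℂ, t ≠ 0 → (∃ φ₀ : ℝ, hK φ₀ ^ 2 = t) →
      ∃ φ ∈ Set.Ioo 0 Real.pi, hK φ ^ 2 = t ∧ kleinFiber a b t = circleC a b φ) := by
  have pi_pos := Real.pi_pos
  have circ_neg : ∀ φ : ℝ, circleC a b φ = circleC a b (-φ) := by
    intro φ
    refine (circleC_congr ?_ (Or.inr (hK_neg φ))).symm
    simp [gK, Real.cos_neg]
  refine ⟨circ_neg, ?_, ?_⟩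
  · -- K_0 = C_0 ∪ C_{-π}
    have h0 : hK 0 = 0 := (hK_eq_zero_iff 0).mpr Real.sin_zero
    have hpi : hK (-Real.pi) = 0 := (hK_eq_zero_iff _).mpr (by rw [Real.sin_neg, Real.sin_pi, neg_zero])
    apply Subset.antisymm
    · rintro ⟨z, w⟩ ⟨⟨θ, hθ, ψ, hψ, hx⟩, hw⟩
      simp only [Prod.mk.injEq] at hx
      obtain ⟨hz, hw'⟩ := hx
      subst hz hw'
      simp only [zero_mul] at hw
      have hwz : Complex.exp (Complex.I * (θ:ℂ)) * gK a b ψ * hK ψ = 0 := by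
        exact pow_eq_zero_iff (n := 2) (by norm_num) |>.mp hw
      have hhψ : hK ψ = 0 := by
        rcases mul_eq_zero.mp hwz with h | h
        · rcases mul_eq_zero.mp h with h | h
          · exact absurd h (Complex.exp_ne_zero _)
          · exact absurd h (gK_ne_zero hb hab ψ)
        · exact h
      have hsψ : Real.sin ψ = 0 := (hK_eq_zero_iff ψ).mp hhψ
      obtain ⟨n, hn⟩ := Real.sin_eq_zero_iff.mp hsψ
      have hn1 : (-1:ℝ) ≤ (n:ℝ) := by
        by_contra hc
        push_neg at hc
        have : (n:ℝ) * Real.pi < -Real.pi := by nlinarith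
        rw [hn] at this; exact absurd hψ.1 (by linarith)
      have hn2 : (n:ℝ) < 1 := by
        by_contra hc
        push_neg at hc
        have : Real.pi ≤ (n:ℝ) * Real.pi := by nlinarith
        rw [hn] at this; exact absurd hψ.2 (by linarith)
      have hn1' : (-1:ℤ) ≤ n := by exact_mod_cast hn1
      have hn2' : n < (1:ℤ) := by exact_mod_cast hn2
      interval_cases n
      · -- n = -1, ψ = -π
        right
        have hψπ : ψ = -Real.pi := by
          rw [← hn]; push_cast; ring
        subst hψπ
        exact ⟨θ, rfl⟩
      · -- n = 0, ψ = 0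
        left
        have hψ0 : ψ = 0 := by rw [← hn]; push_cast; ring
        subst hψ0
        exact ⟨θ, rfl⟩
    · rintro x (hx | hx)
      · exact circleC_subset_fiber ⟨by linarith, pi_pos⟩ (by rw [h0]; ring) hx
      · exact circleC_subset_fiber ⟨le_refl _, by linarith⟩ (by rw [hpi]; ring) hx
  · -- fibers over t ≠ 0
    rintro t ht ⟨φ₀, hφ₀⟩
    have hs0 : Real.sin φ₀ ≠ 0 := by
      intro h
      apply ht
      rw [← hφ₀, (hK_eq_zero_iff φ₀).mpr h]; ring
    have hp : (0:ℝ) < 2 * Real.pi := by positivity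
    set φ₁ := φ₀ - toIocDiv hp (-Real.pi) φ₀ • (2 * Real.pi) with hφ₁def
    have hφ₁mem : φ₁ ∈ Set.Ioc (-Real.pi) Real.pi := by
      have := sub_toIocDiv_zsmul_mem_Ioc hp (-Real.pi) φ₀
      rwa [show -Real.pi + 2 * Real.pi = Real.pi by ring] at this
    have hsin1 : Real.sin φ₁ = Real.sin φ₀ := Real.sin_periodic.sub_zsmul_eq _
    have hcos1 : Real.cos φ₁ = Real.cos φ₀ := Real.cos_periodic.sub_zsmul_eq _
    have hh1 : hK φ₁ = hK φ₀ := hK_of_sin_cos hsin1 hcos1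
    have hs1 : Real.sin φ₁ ≠ 0 := hsin1 ▸ hs0
    have hφ₁ne : φ₁ ≠ Real.pi := by
      intro h; exact hs1 (h ▸ Real.sin_pi)
    have hφ₁lt : φ₁ < Real.pi := lt_of_le_of_ne hφ₁mem.2 hφ₁ne
    have hφ₁ne0 : φ₁ ≠ 0 := by
      intro h; exact hs1 (h ▸ Real.sin_zero)
    rcases lt_or_gt_of_ne hφ₁ne0 with hneg | hpos
    · have ht2 : hK (-φ₁) ^ 2 = t := by
        rw [hK_neg, ← hφ₀, ← hh1]; ring
      have hsneg : Real.sin (-φ₁) ≠ 0 := by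
        rw [Real.sin_neg]; exact neg_ne_zero.mpr hs1
      refine ⟨-φ₁, ⟨by linarith, by linarith [hφ₁mem.1]⟩, ht2, ?_⟩
      exact Subset.antisymm (fiber_subset_circle hb hab hsneg ht2)
        (circleC_subset_fiber ⟨by linarith, by linarith [hφ₁mem.1]⟩ ht2)
    · have ht2 : hK φ₁ ^ 2 = t := by rw [hh1, hφ₀]
      refine ⟨φ₁, ⟨hpos, hφ₁lt⟩, ht2, ?_⟩
      exact Subset.antisymm (fiber_subset_circle hb hab hs1 ht2)
        (circleC_subset_fiber ⟨by linarith, hφ₁lt⟩ ht2)
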